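/- Let E be a Banach space, Λ ⊆ ℝ² and suppose 𝓕 : ℝ² × E → E is continuous with 𝓕(λ, 0) = 0 for all λ, and that the Fréchet derivative 𝒜(λ) := D_v𝓕(λ, 0) exists, depends continuously on λ, and satisfies ‖𝓕(λ,v) - 𝒜(λ)v‖/‖v‖ → 0 as (λ,v) → (λ₀, 0). If (λ₀, 0) is a bifurcation point (i.e., there exist nontrivial solutions (λₙ, vₙ) with 𝓕(λₙ, vₙ) = 0, vₙ ≠ 0, λₙ → λ₀, vₙ → 0) and each 𝒜(λ) = Id - K(λ) with K(λ) compact and λ ↦ K(λ) continuous, then 𝒜(λ₀) : E → E is not an isomorphism; equivalently Ker 𝒜(λ₀) ≠ {0}. -/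
import Mathlib

/-- necessary condition for bifurcation: Let `E` be a Banach space and
`𝓕 : ℝ² × E → E` continuous with `𝓕(λ, 0) = 0`, whose derivative at `0`,
`𝒜(λ) = Id - K(λ)` with `K(λ)` compact and `λ ↦ K(λ)` continuous, satisfies
`‖𝓕(λ,v) - 𝒜(λ)v‖/‖v‖ → 0` as `(λ, v) → (λ₀, 0)`.  If `(λ₀, 0)` is a bifurcation
point (there are nontrivial solutions `(λₙ, vₙ)` with `𝓕(λₙ,vₙ)=0`, `vₙ ≠ 0`,
`λₙ → λ₀`, `vₙ → 0`), then `𝒜(λ₀)` is not an isomorphism: `Ker 𝒜(λ₀) ≠ {0}`. -/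
theorem stmt_17
    {E : Type*} [NormedAddCommGroup E] [NormedSpace ℝ E] [CompleteSpace E]
    (F : (ℝ × ℝ) × E → E) (hFcont : Continuous F)
    (hFzero : ∀ lam : ℝ × ℝ, F (lam, 0) = 0)
    (K : (ℝ × ℝ) → E →L[ℝ] E)
    (hKcomp : ∀ lam, IsCompactOperator (K lam))
    (hKcont : Continuous K)
    (lam₀ : ℝ × ℝ)
    (hlin : ∀ ε > (0:ℝ), ∃ δ > (0:ℝ), ∀ (lam : ℝ × ℝ) (v : E),
      dist lam lam₀ < δ → v ≠ 0 → ‖v‖ < δ →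
        ‖F (lam, v) - (v - K lam v)‖ ≤ ε * ‖v‖)
    (lamSeq : ℕ → ℝ × ℝ) (vSeq : ℕ → E)
    (hsol : ∀ n, F (lamSeq n, vSeq n) = 0)
    (hne : ∀ n, vSeq n ≠ 0)
    (hlamlim : Filter.Tendsto lamSeq Filter.atTop (nhds lam₀))
    (hvlim : Filter.Tendsto vSeq Filter.atTop (nhds 0)) :
    ∃ w : E, w ≠ 0 ∧ w - K lam₀ w = 0 := by
  set w : ℕ → E := fun n => ‖vSeq n‖⁻¹ • vSeq n with hw
  have hnorm : ∀ n, ‖w n‖ = 1 := by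
    intro n
    have h := norm_pos_iff.2 (hne n)
    simp [hw, norm_smul, abs_of_pos (inv_pos.2 h), inv_mul_cancel₀ h.ne']
  -- step: w n - K (lamSeq n) (w n) → 0
  have key : Filter.Tendsto (fun n => w n - K (lamSeq n) (w n)) Filter.atTop (nhds 0) := by
    rw [NormedAddCommGroup.tendsto_nhds_zero]
    intro ε hε
    obtain ⟨ε', hε', hε'2⟩ : ∃ ε' > 0, ε' < ε := ⟨ε/2, by positivity, by linarith⟩
    obtain ⟨δ, hδ, hδ'⟩ := hlin ε' hε'
    have h1 : ∀ᶠ n in Filter.atTop, dist (lamSeq n) lam₀ < δ := by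
      obtain ⟨N, hN⟩ := Metric.tendsto_atTop.mp hlamlim δ hδ
      exact Filter.eventually_atTop.2 ⟨N, hN⟩
    have h2 : ∀ᶠ n in Filter.atTop, ‖vSeq n‖ < δ := by
      obtain ⟨N, hN⟩ := Metric.tendsto_atTop.mp hvlim δ hδ
      exact Filter.eventually_atTop.2 ⟨N, fun n hn => by simpa [dist_eq_norm] using hN n hn⟩
    filter_upwards [h1, h2] with n hn1 hn2
    have hb := hδ' (lamSeq n) (vSeq n) hn1 (hne n) hn2
    rw [hsol n] at hb
    have hpos := norm_pos_iff.2 (hne n)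
    have heq : w n - K (lamSeq n) (w n) = ‖vSeq n‖⁻¹ • (vSeq n - K (lamSeq n) (vSeq n)) := by
      simp [hw, smul_sub, map_smul]
    calc ‖w n - K (lamSeq n) (w n)‖ = ‖vSeq n‖⁻¹ * ‖vSeq n - K (lamSeq n) (vSeq n)‖ := by
          rw [heq, norm_smul, Real.norm_eq_abs, abs_of_pos (inv_pos.2 hpos)]
      _ ≤ ‖vSeq n‖⁻¹ * (ε' * ‖vSeq n‖) := by
          apply mul_le_mul_of_nonneg_left _ (inv_pos.2 hpos).le
          rw [norm_sub_rev]; simpa [norm_neg, zero_sub] using hb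
      _ = ε' := by field_simp
      _ < ε := hε'2
  -- step: K (lamSeq n) (w n) - K lam₀ (w n) → 0
  have hKdiff : Filter.Tendsto (fun n => K (lamSeq n) (w n) - K lam₀ (w n))
      Filter.atTop (nhds 0) := by
    rw [NormedAddCommGroup.tendsto_nhds_zero]
    intro ε hε
    have hKK : Filter.Tendsto (fun n => K (lamSeq n)) Filter.atTop (nhds (K lam₀)) :=
      (hKcont.tendsto lam₀).comp hlamlim
    obtain ⟨N, hN⟩ := Metric.tendsto_atTop.mp hKK ε hε
    filter_upwards [Filter.eventually_atTop.2 ⟨N, hN⟩] with n hn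
    calc ‖K (lamSeq n) (w n) - K lam₀ (w n)‖
        = ‖(K (lamSeq n) - K lam₀) (w n)‖ := by simp
      _ ≤ ‖K (lamSeq n) - K lam₀‖ * ‖w n‖ := (K (lamSeq n) - K lam₀).le_opNorm _
      _ = ‖K (lamSeq n) - K lam₀‖ := by rw [hnorm n, mul_one]
      _ < ε := by simpa [dist_eq_norm] using hn
  -- so w n - K lam₀ (w n) → 0
  have key₀ : Filter.Tendsto (fun n => w n - K lam₀ (w n)) Filter.atTop (nhds 0) := by
    have := key.add hKdiff
    simpa using this
  -- compactness: extract convergent subsequence of K lam₀ (w n)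
  have hball : ∀ n, w n ∈ Metric.closedBall (0:E) 1 := by
    intro n; simp [Metric.mem_closedBall, dist_eq_norm, (hnorm n).le]
  have hcpt : IsCompact (closure ((K lam₀) '' Metric.closedBall 0 1)) :=
    (hKcomp lam₀).isCompact_closure_image_closedBall (𝕜₁ := ℝ) 1
  have hmem : ∀ n, K lam₀ (w n) ∈ closure ((K lam₀) '' Metric.closedBall 0 1) :=
    fun n => subset_closure ⟨w n, hball n, rfl⟩
  obtain ⟨y, -, φ, hφ, hylim⟩ := hcpt.tendsto_subseq hmem
  -- w (φ n) → y
  have hwlim : Filter.Tendsto (fun n => w (φ n)) Filter.atTop (nhds y) := by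
    have h1 : Filter.Tendsto (fun n => w (φ n) - K lam₀ (w (φ n))) Filter.atTop (nhds 0) :=
      key₀.comp hφ.tendsto_atTop
    have := h1.add hylim
    simpa using this
  refine ⟨y, ?_, ?_⟩
  · intro hy0
    have : Filter.Tendsto (fun n => ‖w (φ n)‖) Filter.atTop (nhds ‖y‖) :=
      hwlim.norm
    rw [hy0, norm_zero] at this
    have : Filter.Tendsto (fun _ : ℕ => (1:ℝ)) Filter.atTop (nhds 0) := by
      simpa [hnorm] using this
    exact zero_ne_one (tendsto_nhds_unique this tendsto_const_nhds)
  · have hK : Filter.Tendsto (fun n => K lam₀ (w (φ n))) Filter.atTop (nhds (K lam₀ y)) :=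
      ((K lam₀).continuous.tendsto y).comp hwlim
    have := hwlim.sub hK
    exact tendsto_nhds_unique this (key₀.comp hφ.tendsto_atTop)
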